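/- Characterization of hockey-stick divergence curves: for a function H : ℝ_{≥0} → ℝ, there exist probability measures P and Q on some measurable space such that H(α) = H_α(P‖Q) for all α ≥ 0 if and only if H is convex, nonincreasing, H(0) = 1, and H(α) ≥ (1 − α)₊ for all α ≥ 0 (where (x)₊ = max{x,0}). -/

import Mathlib

open MeasureTheory

/-- The hockey-stick divergence `H_α(P‖Q) = ∫ (p − α·q)₊ dμ` with `μ = P + Q`. -/
noncomputable def hockeyStick {Ω : Type*} [MeasurableSpace Ω] (α : ℝ) (P Q : Measure Ω) : ℝ :=
  ∫ ω, max ((P.rnDeriv (P + Q) ω).toReal - α * (Q.rnDeriv (P + Q) ω).toReal) 0 ∂(P + Q)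

open Set Filter Topology Function

section Forward
variable {Ω : Type*} [MeasurableSpace Ω] (P Q : Measure Ω) [IsProbabilityMeasure P]
  [IsProbabilityMeasure Q]

lemma hs_meas (α : ℝ) :
    Measurable (fun ω => max ((P.rnDeriv (P + Q) ω).toReal - α * (Q.rnDeriv (P + Q) ω).toReal) 0) := by
  apply Measurable.max _ measurable_const
  exact ((Measure.measurable_rnDeriv P (P+Q)).ennreal_toReal).sub
    (((Measure.measurable_rnDeriv Q (P+Q)).ennreal_toReal).const_mul α)

lemma hs_integrable {α : ℝ} (hα : 0 ≤ α) :
    Integrable (fun ω => max ((P.rnDeriv (P + Q) ω).toReal - α * (Q.rnDeriv (P + Q) ω).toReal) 0)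
      (P + Q) := by
  refine Integrable.mono (Measure.integrable_toReal_rnDeriv (μ := P) (ν := P + Q))
    (hs_meas P Q α).aestronglyMeasurable (ae_of_all _ fun ω => ?_)
  have h1 : (0:ℝ) ≤ (P.rnDeriv (P + Q) ω).toReal := ENNReal.toReal_nonneg
  have h2 : (0:ℝ) ≤ α * (Q.rnDeriv (P + Q) ω).toReal :=
    mul_nonneg hα ENNReal.toReal_nonneg
  rw [Real.norm_eq_abs, Real.norm_eq_abs, abs_of_nonneg (le_max_right _ _),
    abs_of_nonneg h1]
  exact max_le (by linarith) h1

lemma hs_zero : hockeyStick 0 P Q = 1 := by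
  have : ∀ ω, max ((P.rnDeriv (P + Q) ω).toReal - 0 * (Q.rnDeriv (P + Q) ω).toReal) 0
      = (P.rnDeriv (P + Q) ω).toReal := by
    intro ω; rw [zero_mul, sub_zero, max_eq_left ENNReal.toReal_nonneg]
  rw [hockeyStick]
  simp_rw [this]
  rw [Measure.integral_toReal_rnDeriv (Measure.absolutelyContinuous_of_le (Measure.le_add_right le_rfl))]
  simp

lemma hs_antitone : AntitoneOn (fun α => hockeyStick α P Q) (Set.Ici (0:ℝ)) := by
  intro a ha b hb hab
  refine integral_mono (hs_integrable P Q hb) (hs_integrable P Q ha) fun ω => ?_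
  refine max_le_max ?_ le_rfl
  have : (0:ℝ) ≤ (Q.rnDeriv (P + Q) ω).toReal := ENNReal.toReal_nonneg
  nlinarith

lemma hs_convex : ConvexOn ℝ (Set.Ici (0:ℝ)) (fun α => hockeyStick α P Q) := by
  refine ⟨convex_Ici 0, fun x hx y hy a b ha hb hab => ?_⟩
  simp only []
  have hxy : (0:ℝ) ≤ a • x + b • y := by
    simp only [smul_eq_mul]
    have := mul_nonneg ha (mem_Ici.mp hx)
    have := mul_nonneg hb (mem_Ici.mp hy)
    linarith
  calc hockeyStick (a • x + b • y) P Q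
      ≤ ∫ ω, (a * max ((P.rnDeriv (P + Q) ω).toReal - x * (Q.rnDeriv (P + Q) ω).toReal) 0
          + b * max ((P.rnDeriv (P + Q) ω).toReal - y * (Q.rnDeriv (P + Q) ω).toReal) 0) ∂(P + Q) := by
        refine integral_mono (hs_integrable P Q hxy)
          (((hs_integrable P Q hx).const_mul a).add ((hs_integrable P Q hy).const_mul b))
          fun ω => ?_
        set p := (P.rnDeriv (P + Q) ω).toReal
        set q := (Q.rnDeriv (P + Q) ω).toReal
        have h1 : a * (p - x * q) ≤ a * max (p - x * q) 0 :=
          mul_le_mul_of_nonneg_left (le_max_left _ _) ha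
        have h2 : b * (p - y * q) ≤ b * max (p - y * q) 0 :=
          mul_le_mul_of_nonneg_left (le_max_left _ _) hb
        have h3 : 0 ≤ a * max (p - x * q) 0 + b * max (p - y * q) 0 := by
          have := mul_nonneg ha (le_max_right (p - x * q) 0)
          have := mul_nonneg hb (le_max_right (p - y * q) 0)
          linarith
        refine max_le ?_ h3
        have : p - (a • x + b • y) * q = a * (p - x * q) + b * (p - y * q) := by
          simp only [smul_eq_mul]; linear_combination (-p) * hab
        rw [this]; linarith
    _ = a * hockeyStick x P Q + b * hockeyStick y P Q := by
        rw [integral_add ((hs_integrable P Q hx).const_mul a) ((hs_integrable P Q hy).const_mul b),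
          integral_const_mul, integral_const_mul]
        rfl
  
lemma hs_lb {α : ℝ} (hα : 0 ≤ α) : max (1 - α) 0 ≤ hockeyStick α P Q := by
  have hPle : P ≪ P + Q := Measure.absolutelyContinuous_of_le (Measure.le_add_right le_rfl)
  have hQle : Q ≪ P + Q := Measure.absolutelyContinuous_of_le (Measure.le_add_left le_rfl)
  refine max_le ?_ (integral_nonneg fun ω => le_max_right _ _)
  have h1 : (1:ℝ) - α = ∫ ω, ((P.rnDeriv (P + Q) ω).toReal - α * (Q.rnDeriv (P + Q) ω).toReal) ∂(P+Q) := by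
    rw [integral_sub (Measure.integrable_toReal_rnDeriv)
      ((Measure.integrable_toReal_rnDeriv).const_mul α), integral_const_mul,
      Measure.integral_toReal_rnDeriv hPle, Measure.integral_toReal_rnDeriv hQle]
    simp
  rw [h1]
  exact integral_mono (((Measure.integrable_toReal_rnDeriv).sub
    ((Measure.integrable_toReal_rnDeriv).const_mul α))) (hs_integrable P Q hα)
    fun ω => le_max_left _ _

end Forward

lemma stieltjes_measure_Ioi (f : StieltjesFunction ℝ) {l : ℝ} (hf : Tendsto f atTop (𝓝 l)) (x : ℝ) :
    f.measure (Set.Ioi x) = ENNReal.ofReal (l - f x) := by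
  have hle : f x ≤ l := Monotone.ge_of_tendsto f.mono hf x
  have hll : leftLim f x ≤ f x := f.mono.leftLim_le le_rfl
  have hsplit : f.measure (Set.Ici x) = f.measure {x} + f.measure (Set.Ioi x) := by
    rw [← measure_union (by simp) measurableSet_Ioi, ← Set.insert_eq, Set.Ioi_insert]
  rw [f.measure_Ici hf, f.measure_singleton] at hsplit
  have harith : ENNReal.ofReal (l - leftLim f x)
      = ENNReal.ofReal (f x - leftLim f x) + ENNReal.ofReal (l - f x) := by
    rw [← ENNReal.ofReal_add (by linarith) (by linarith)]
    ring_nf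
  rw [harith] at hsplit
  exact (ENNReal.add_right_inj ENNReal.ofReal_ne_top).mp hsplit.symm

lemma rightLim_ae_eq {g : ℝ → ℝ} (hg : Monotone g) :
    ∀ᵐ x ∂(volume : Measure ℝ), rightLim g x = g x := by
  have hcount : {x : ℝ | ¬ContinuousAt g x}.Countable := hg.countable_not_continuousAt
  have hsub : {x : ℝ | rightLim g x ≠ g x} ⊆ {x | ¬ContinuousAt g x} := by
    intro x hx hc
    exact hx (rightLim_eq_of_tendsto (h := nhdsGT_neBot x)
      (hc.tendsto.mono_left nhdsWithin_le_nhds))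
  rw [ae_iff]
  exact measure_mono_null hsub (Set.Countable.measure_zero hcount _)
section Rev
variable {H : ℝ → ℝ}

/-- right-slope infimum: the right derivative of a convex function (clamped to `[0,∞)`). -/
noncomputable def gs (H : ℝ → ℝ) (x : ℝ) : ℝ := sInf (slope H (max x 0) '' Set.Ioi (max x 0))

variable (hcx : ConvexOn ℝ (Set.Ici 0) H) (han : AntitoneOn H (Set.Ici 0))
  (h0 : H 0 = 1) (hlb : ∀ α : ℝ, 0 ≤ α → max (1 - α) 0 ≤ H α)

include h0 hlb in
lemma slope_lb0 {y : ℝ} (hy : 0 < y) : -1 ≤ slope H 0 y := by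
  have h1 : 1 - y ≤ H y := le_trans (le_max_left _ _) (hlb y hy.le)
  rw [slope_def_field, h0]
  rw [le_div_iff₀ (by linarith : (0:ℝ) < y - 0)]
  linarith

include hcx h0 hlb in
lemma slope_lb {x y : ℝ} (hx : 0 ≤ x) (hxy : x < y) : -1 ≤ slope H x y := by
  rcases eq_or_lt_of_le hx with h | h
  · exact h ▸ slope_lb0 h0 hlb (h ▸ hxy)
  · have hy : (0:ℝ) < y := lt_trans h hxy
    have hmono := hcx.slope_mono (mem_Ici.mpr hy.le)
    have h01 : (0:ℝ) ∈ Set.Ici (0:ℝ) \ {y} := ⟨Set.mem_Ici.mpr le_rfl, by simp [hy.ne]⟩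
    have hx1 : x ∈ Set.Ici (0:ℝ) \ {y} := ⟨Set.mem_Ici.mpr hx, by simp [hxy.ne]⟩
    have := hmono h01 hx1 h.le
    rw [slope_comm H y 0, slope_comm H y x] at this
    exact le_trans (slope_lb0 h0 hlb hy) this

include han in
lemma slope_ub {x y : ℝ} (hx : 0 ≤ x) (hxy : x < y) : slope H x y ≤ 0 := by
  rw [slope_def_field, div_nonpos_iff]
  right
  exact ⟨by linarith [han hx (le_trans hx hxy.le) hxy.le], by linarith⟩

include hcx h0 hlb in
lemma gs_bddBelow (x : ℝ) : BddBelow (slope H (max x 0) '' Set.Ioi (max x 0)) := by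
  refine ⟨-1, fun z hz => ?_⟩
  obtain ⟨y, hy, rfl⟩ := hz
  exact slope_lb hcx h0 hlb (le_max_right x 0) hy

include hcx h0 hlb in
lemma gs_le_slope' {x y : ℝ} (hxy : max x 0 < y) : gs H x ≤ slope H (max x 0) y :=
  csInf_le (gs_bddBelow hcx h0 hlb x) ⟨y, Set.mem_Ioi.mpr hxy, rfl⟩

include hcx h0 hlb in
lemma gs_le_slope {x y : ℝ} (hx : 0 ≤ x) (hxy : x < y) : gs H x ≤ slope H x y := by
  have hm : max x 0 = x := max_eq_left hx
  have := gs_le_slope' hcx h0 hlb (x := x) (y := y) (by rw [hm]; exact hxy)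
  rwa [hm] at this

include hcx h0 hlb in
lemma gs_lb (x : ℝ) : -1 ≤ gs H x := by
  refine le_csInf ⟨_, ⟨max x 0 + 1, Set.mem_Ioi.mpr (lt_add_one _), rfl⟩⟩ ?_
  rintro z ⟨y, hy, rfl⟩
  exact slope_lb hcx h0 hlb (le_max_right x 0) hy

include hcx han h0 hlb in
lemma gs_ub (x : ℝ) : gs H x ≤ 0 :=
  le_trans (gs_le_slope' hcx h0 hlb (lt_add_one _))
    (slope_ub han (le_max_right x 0) (lt_add_one _))

include hcx h0 hlb in
lemma slope_le_slope {x y z : ℝ} (hx : 0 ≤ x) (hxy : x ≤ y) (hyz : y < z) :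
    slope H x z ≤ slope H y z := by
  have hmono := hcx.slope_mono (mem_Ici.mpr (le_trans (le_trans hx hxy) hyz.le))
  have hx1 : x ∈ Set.Ici (0:ℝ) \ {z} := ⟨hx, by simp; exact ne_of_lt (lt_of_le_of_lt hxy hyz)⟩
  have hy1 : y ∈ Set.Ici (0:ℝ) \ {z} := ⟨le_trans hx hxy, by simp [hyz.ne]⟩
  have := hmono hx1 hy1 hxy
  rwa [slope_comm H z x, slope_comm H z y] at this

include hcx h0 hlb in
lemma gs_mono : Monotone (gs H) := by
  intro x y hxy
  set x' := max x 0 with hx'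
  set y' := max y 0 with hy'
  have hx0 : 0 ≤ x' := le_max_right _ _
  have hy0 : 0 ≤ y' := le_max_right _ _
  have hxy' : x' ≤ y' := max_le_max hxy le_rfl
  rcases eq_or_lt_of_le hxy' with h | h
  · unfold gs; rw [← hx', ← hy', h]
  · refine le_csInf ⟨_, ⟨y' + 1, Set.mem_Ioi.mpr (lt_add_one _), rfl⟩⟩ ?_
    rintro z ⟨w, hw, rfl⟩
    rw [Set.mem_Ioi] at hw
    calc gs H x ≤ slope H x' w := gs_le_slope' hcx h0 hlb (lt_trans h hw)
      _ ≤ slope H y' w := slope_le_slope hcx h0 hlb hx0 h.le hw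

include hcx h0 hlb in
lemma gs_hasDeriv {x : ℝ} (hx : 0 ≤ x) : HasDerivWithinAt H (gs H x) (Set.Ioi x) x := by
  rw [hasDerivWithinAt_iff_tendsto_slope]
  have hd : Set.Ioi x \ {x} = Set.Ioi x := Set.diff_singleton_eq_self (fun h => lt_irrefl x h)
  rw [hd]
  have hm : max x 0 = x := max_eq_left hx
  have hmono : MonotoneOn (slope H x) (Set.Ioi x) := by
    have := hcx.slope_mono (mem_Ici.mpr hx)
    refine this.mono fun y hy => ⟨le_trans hx (le_of_lt hy), ?_⟩
    simp only [Set.mem_singleton_iff]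
    exact ne_of_gt hy
  have hbdd : BddBelow (slope H x '' Set.Ioi x) := by
    have := gs_bddBelow hcx h0 hlb x
    rwa [hm] at this
  have := hmono.tendsto_nhdsGT hbdd
  convert this using 2
  rw [gs, hm]

include hcx han h0 hlb in
lemma H_contOn : ContinuousOn H (Set.Ici 0) := by
  intro x hx
  rcases eq_or_lt_of_le (mem_Ici.mp hx) with h | h
  · -- continuity at 0 within Ici 0 by squeeze
    subst h
    have hub : ∀ y ∈ Set.Ici (0:ℝ), H y ≤ 1 := fun y hy => h0 ▸ han (Set.mem_Ici.mpr le_rfl) hy hy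
    have hlb' : ∀ y ∈ Set.Ici (0:ℝ), 1 - y ≤ H y := fun y hy =>
      le_trans (le_max_left _ _) (hlb y hy)
    rw [ContinuousWithinAt, h0]
    refine tendsto_of_tendsto_of_tendsto_of_le_of_le'
      (g := fun y : ℝ => 1 - y) (h := fun _ : ℝ => (1:ℝ)) ?_ tendsto_const_nhds ?_ ?_
    · have h : Tendsto (fun y : ℝ => 1 - y) (nhds 0) (nhds 1) := by
        have h2 : Continuous (fun y : ℝ => 1 - y) := continuous_const.sub continuous_id
        simpa using h2.tendsto (0:ℝ)
      exact h.mono_left nhdsWithin_le_nhds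
    · filter_upwards [self_mem_nhdsWithin] with y hy using hlb' y hy
    · filter_upwards [self_mem_nhdsWithin] with y hy using hub y hy
  · -- interior point
    have hcx' : ConvexOn ℝ (Set.Ioi (0:ℝ)) H := hcx.subset Set.Ioi_subset_Ici_self (convex_Ioi 0)
    have := hcx'.continuousOn isOpen_Ioi
    exact ((this.continuousAt (Ioi_mem_nhds h)).continuousWithinAt)

include hcx han h0 hlb in
lemma gs_integral {a b : ℝ} (ha : 0 ≤ a) (hab : a ≤ b) :
    ∫ y in a..b, gs H y = H b - H a := by
  refine intervalIntegral.integral_eq_sub_of_hasDeriv_right_of_le hab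
    ((H_contOn hcx han h0 hlb).mono ?_) (fun x hx => gs_hasDeriv hcx h0 hlb (le_trans ha hx.1.le))
    ((gs_mono hcx h0 hlb).monotoneOn _).intervalIntegrable
  exact fun x hx => le_trans ha hx.1


include hcx han h0 hlb in
lemma H_nonneg {x : ℝ} (hx : 0 ≤ x) : 0 ≤ H x := le_trans (le_max_right _ _) (hlb x hx)

include hcx han h0 hlb in
lemma sH_le {x : ℝ} (hx : 0 ≤ x) : sInf (H '' Set.Ici 0) ≤ H x :=
  csInf_le ⟨0, fun y ⟨z, hz, hzy⟩ => hzy ▸ H_nonneg hcx han h0 hlb hz⟩ ⟨x, hx, rfl⟩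

include hcx han h0 hlb in
lemma sH_nonneg : 0 ≤ sInf (H '' Set.Ici 0) :=
  le_csInf ⟨H 0, 0, Set.mem_Ici.mpr le_rfl, rfl⟩ (fun y ⟨z, hz, hzy⟩ => hzy ▸ H_nonneg hcx han h0 hlb hz)

include hcx han h0 hlb in
lemma H_tendsto : Tendsto H atTop (𝓝 (sInf (H '' Set.Ici 0))) := by
  rw [tendsto_order]
  constructor
  · intro a ha
    filter_upwards [eventually_ge_atTop (0:ℝ)] with x hx
    exact lt_of_lt_of_le ha (sH_le hcx han h0 hlb hx)
  · intro b hb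
    obtain ⟨y, ⟨x₀, hx₀, rfl⟩, hyb⟩ := exists_lt_of_csInf_lt (⟨H 0, ⟨0, Set.mem_Ici.mpr le_rfl, rfl⟩⟩ : (H '' Set.Ici 0).Nonempty) hb
    filter_upwards [eventually_ge_atTop x₀] with x hx
    exact lt_of_le_of_lt (han hx₀ (le_trans hx₀ hx) hx) hyb

include hcx h0 hlb in
lemma slope_le_gs {u x : ℝ} (hu : 0 ≤ u) (hux : u < x) : slope H u x ≤ gs H x := by
  have hx : 0 ≤ x := le_trans hu hux.le
  have hm : max x 0 = x := max_eq_left hx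
  rw [gs, hm]
  refine le_csInf ⟨_, ⟨x + 1, Set.mem_Ioi.mpr (lt_add_one _), rfl⟩⟩ ?_
  rintro z ⟨w, hw, rfl⟩
  rw [Set.mem_Ioi] at hw
  have hmono := hcx.slope_mono (mem_Ici.mpr hx)
  have hu1 : u ∈ Set.Ici (0:ℝ) \ {x} := ⟨Set.mem_Ici.mpr hu, by simp [hux.ne]⟩
  have hw1 : w ∈ Set.Ici (0:ℝ) \ {x} := ⟨Set.mem_Ici.mpr (le_trans hx hw.le), by simp [hw.ne']⟩
  have := hmono hu1 hw1 (le_trans hux.le hw.le)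
  rwa [slope_comm H x u] at this

include hcx han h0 hlb in
lemma gs_tendsto : Tendsto (gs H) atTop (𝓝 0) := by
  refine tendsto_of_tendsto_of_tendsto_of_le_of_le'
    (g := fun x => H x - H (x - 1)) (h := fun _ => (0:ℝ)) ?_ tendsto_const_nhds ?_ ?_
  · have h1 : Tendsto (fun x : ℝ => H (x - 1)) atTop (𝓝 (sInf (H '' Set.Ici 0))) :=
      (H_tendsto hcx han h0 hlb).comp (tendsto_atTop_add_const_right atTop (-1) tendsto_id)
    have := (H_tendsto hcx han h0 hlb).sub h1
    simpa using this
  · filter_upwards [eventually_ge_atTop (1:ℝ)] with x hx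
    have h1 : slope H (x - 1) x ≤ gs H x :=
      slope_le_gs hcx h0 hlb (by linarith) (by linarith)
    rw [slope_def_field] at h1
    have : x - (x - 1) = 1 := by ring
    rw [this, div_one] at h1
    exact h1
  · filter_upwards with x using gs_ub hcx han h0 hlb x

include hcx han h0 hlb in
lemma key_lintegral {α : ℝ} (hα : 0 ≤ α) :
    ∫⁻ u in Set.Ioi (0:ℝ), ENNReal.ofReal (-(gs H (α + u)))
      = ENNReal.ofReal (H α - sInf (H '' Set.Ici 0)) := by
  set s := sInf (H '' Set.Ici 0) with hs
  set h : ℝ → ENNReal := fun u => ENNReal.ofReal (-(gs H (α + u))) with hh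
  have hgsm : Monotone (gs H) := gs_mono hcx h0 hlb
  have hmeas : Measurable h :=
    ((hgsm.measurable.comp (measurable_id.const_add α)).neg).ennreal_ofReal
  have hind : ∀ u, (Set.Ioi (0:ℝ)).indicator h u = ⨆ n : ℕ, (Set.Ioc (0:ℝ) (n:ℝ)).indicator h u := by
    intro u
    by_cases hu : u ∈ Set.Ioi (0:ℝ)
    · rw [Set.indicator_of_mem hu]
      obtain ⟨n, hn⟩ := exists_nat_ge u
      refine le_antisymm (le_iSup_of_le n (le_of_eq (Set.indicator_of_mem
          (Set.mem_Ioc.mpr ⟨Set.mem_Ioi.mp hu, hn⟩) h).symm))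
        (iSup_le fun m => Set.indicator_le_self _ _ u)
    · rw [Set.indicator_of_notMem hu]
      symm
      simp only [ENNReal.iSup_eq_zero]
      intro n
      exact Set.indicator_of_notMem (fun hmem => hu (Set.Ioc_subset_Ioi_self hmem)) _
  rw [← lintegral_indicator (f := h) measurableSet_Ioi]
  simp_rw [hind]
  have hmono1 : Monotone fun (n : ℕ) (u : ℝ) => (Set.Ioc (0:ℝ) (n:ℝ)).indicator h u := by
    intro m n hmn u
    exact Set.indicator_le_indicator_of_subset
      (Set.Ioc_subset_Ioc_right (Nat.cast_le.mpr hmn)) (fun _ => zero_le) u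
  rw [lintegral_iSup (fun n => hmeas.indicator measurableSet_Ioc) hmono1]
  simp_rw [lintegral_indicator measurableSet_Ioc]
  have hstep : ∀ n : ℕ, ∫⁻ u in Set.Ioc (0:ℝ) (n:ℝ), h u = ENNReal.ofReal (H α - H (α + n)) := by
    intro n
    have hn0 : (0:ℝ) ≤ (n:ℝ) := Nat.cast_nonneg n
    have hint : IntegrableOn (fun u => -(gs H (α + u))) (Set.Ioc (0:ℝ) (n:ℝ)) volume := by
      have hmono : MonotoneOn (fun u => gs H (α + u)) (Set.uIcc (0:ℝ) (n:ℝ)) :=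
        fun x _ y _ hxy => hgsm (by linarith)
      have h2 := hmono.intervalIntegrable (μ := volume)
      rw [intervalIntegrable_iff_integrableOn_Ioc_of_le hn0] at h2
      exact h2.neg
    rw [hh]
    simp only []
    rw [← ofReal_integral_eq_lintegral_ofReal hint
      (ae_of_all _ fun u => neg_nonneg.mpr (gs_ub hcx han h0 hlb _))]
    congr 1
    rw [← intervalIntegral.integral_of_le hn0, intervalIntegral.integral_neg,
      intervalIntegral.integral_comp_add_left (gs H) α,
      gs_integral hcx han h0 hlb (by linarith : (0:ℝ) ≤ α + 0) (by linarith : α + 0 ≤ α + n)]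
    rw [add_zero]
    ring
  simp_rw [hstep]
  have hmono2 : Monotone fun n : ℕ => ENNReal.ofReal (H α - H (α + (n:ℝ))) := by
    intro m n hmn
    apply ENNReal.ofReal_le_ofReal
    have := han (Set.mem_Ici.mpr (by positivity : (0:ℝ) ≤ α + m))
      (Set.mem_Ici.mpr (by positivity : (0:ℝ) ≤ α + n))
      (by have : (m:ℝ) ≤ (n:ℝ) := Nat.cast_le.mpr hmn; linarith)
    linarith
  have hlim : Tendsto (fun n : ℕ => ENNReal.ofReal (H α - H (α + (n:ℝ)))) atTop
      (𝓝 (ENNReal.ofReal (H α - s))) := by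
    apply ENNReal.tendsto_ofReal
    apply Tendsto.const_sub
    exact (H_tendsto hcx han h0 hlb).comp
      (tendsto_atTop_add_const_left atTop α tendsto_natCast_atTop_atTop)
  exact tendsto_nhds_unique (tendsto_atTop_iSup hmono2) hlim

include hcx han h0 hlb in
lemma reverse_construction :
    ∃ (Ω : Type) (_ : MeasurableSpace Ω) (P Q : Measure Ω),
        IsProbabilityMeasure P ∧ IsProbabilityMeasure Q ∧
        ∀ α : ℝ, 0 ≤ α → H α = hockeyStick α P Q := by
  classical
  set s : ℝ := sInf (H '' Set.Ici 0) with hsdef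
  have hs0 : 0 ≤ s := sH_nonneg hcx han h0 hlb
  have hs1 : s ≤ 1 := h0 ▸ sH_le hcx han h0 hlb le_rfl
  have hgsm : Monotone (gs H) := gs_mono hcx h0 hlb
  set f : StieltjesFunction ℝ := hgsm.stieltjesFunction with hfdef
  have hf_eq : ∀ x, f x = rightLim (gs H) x := fun x => rfl
  have hf_lb : ∀ x, -1 ≤ f x := fun x =>
    le_trans (gs_lb hcx h0 hlb x) (hgsm.le_rightLim le_rfl)
  have hf_ub : ∀ x, f x ≤ 0 := fun x =>
    le_trans (hgsm.rightLim_le (lt_add_one x)) (gs_ub hcx han h0 hlb (x + 1))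
  have hf_tendsto : Tendsto f atTop (𝓝 0) := by
    refine tendsto_of_tendsto_of_tendsto_of_le_of_le (gs_tendsto hcx han h0 hlb)
      ((gs_tendsto hcx han h0 hlb).comp (tendsto_atTop_add_const_right atTop 1 tendsto_id))
      (fun x => hgsm.le_rightLim le_rfl) (fun x => hgsm.rightLim_le (lt_add_one x))
  have hQIoi : ∀ x : ℝ, f.measure (Set.Ioi x) = ENNReal.ofReal (-(f x)) := by
    intro x
    rw [stieltjes_measure_Ioi f hf_tendsto, zero_sub]
  set c : ENNReal := ENNReal.ofReal (1 + f 0) with hcdef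
  set Q : Measure ℝ := f.measure.restrict (Set.Ioi 0) + c • Measure.dirac 0 with hQdef
  have hQIoi' : ∀ x : ℝ, 0 ≤ x → Q (Set.Ioi x) = ENNReal.ofReal (-(f x)) := by
    intro x hx
    rw [hQdef, Measure.add_apply, Measure.restrict_apply measurableSet_Ioi,
      Set.inter_eq_self_of_subset_left (Set.Ioi_subset_Ioi hx), hQIoi,
      Measure.smul_apply, Measure.dirac_apply' _ measurableSet_Ioi,
      Set.indicator_of_notMem (by simp [hx] : (0:ℝ) ∉ Set.Ioi x)]
    simp
  have hQuniv : Q Set.univ = 1 := by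
    rw [hQdef, Measure.add_apply, Measure.restrict_apply_univ, hQIoi,
      Measure.smul_apply, measure_univ, smul_eq_mul, mul_one, hcdef,
      ← ENNReal.ofReal_add (by linarith [hf_ub 0]) (by linarith [hf_lb 0])]
    norm_num
  haveI hQprob : IsProbabilityMeasure Q := ⟨hQuniv⟩
  have hQae : ∀ᵐ t ∂Q, 0 ≤ t := by
    rw [ae_iff]
    have hset : {t : ℝ | ¬0 ≤ t} = Set.Iio 0 := by ext t; simp [not_le]
    rw [hset, hQdef, Measure.add_apply, Measure.restrict_apply measurableSet_Iio]
    have h1 : Set.Iio (0:ℝ) ∩ Set.Ioi 0 = ∅ := by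
      ext t; simp only [Set.mem_inter_iff, Set.mem_Iio, Set.mem_Ioi, Set.mem_empty_iff_false,
        iff_false, not_and]; intro h1 h2; linarith
    rw [h1, measure_empty, Measure.smul_apply, Measure.dirac_apply' _ measurableSet_Iio,
      Set.indicator_of_notMem (by simp : (0:ℝ) ∉ Set.Iio 0)]
    simp
  -- layer cake computation
  have hlayer : ∀ α : ℝ, 0 ≤ α →
      ∫⁻ t, ENNReal.ofReal (max (t - α) 0) ∂Q = ENNReal.ofReal (H α - s) := by
    intro α hα
    rw [lintegral_eq_lintegral_meas_lt (f := fun t => max (t - α) 0) Q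
      (ae_of_all _ fun t => le_max_right _ _)
      (((measurable_id'.sub_const α).max measurable_const).aemeasurable)]
    have hsets : ∀ u : ℝ, u ∈ Set.Ioi (0:ℝ) →
        Q {a : ℝ | u < max (a - α) 0} = ENNReal.ofReal (-(f (α + u))) := by
      intro u hu
      rw [Set.mem_Ioi] at hu
      have : {a : ℝ | u < max (a - α) 0} = Set.Ioi (α + u) := by
        ext a
        simp only [Set.mem_setOf_eq, Set.mem_Ioi, lt_max_iff]
        constructor
        · rintro (h | h)
          · linarith
          · linarith
        · intro h; left; linarith
      rw [this, hQIoi' _ (by linarith)]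
    rw [setLIntegral_congr_fun measurableSet_Ioi hsets]
    have hae : ∀ᵐ u ∂(volume : Measure ℝ), f (α + u) = gs H (α + u) := by
      have h1 := rightLim_ae_eq hgsm
      rw [ae_iff] at h1 ⊢
      have hpre : {u : ℝ | ¬f (α + u) = gs H (α + u)}
          = (fun u => α + u) ⁻¹' {x : ℝ | ¬rightLim (gs H) x = gs H x} := by
        ext u; simp only [Set.mem_setOf_eq, Set.mem_preimage, hf_eq]
      rw [hpre, measure_preimage_add]
      exact h1
    rw [lintegral_congr_ae (ae_restrict_of_ae (hae.mono fun u hu => by rw [hu]))]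
    exact key_lintegral hcx han h0 hlb hα
  set P : Measure ℝ := Q.withDensity (fun t => ENNReal.ofReal t)
      + ENNReal.ofReal s • Measure.dirac (-1) with hPdef
  have hWuniv : Q.withDensity (fun t => ENNReal.ofReal t) Set.univ = ENNReal.ofReal (1 - s) := by
    rw [withDensity_apply _ MeasurableSet.univ, Measure.restrict_univ]
    have : ∫⁻ t, ENNReal.ofReal t ∂Q = ∫⁻ t, ENNReal.ofReal (max (t - 0) 0) ∂Q := by
      apply lintegral_congr_ae
      filter_upwards [hQae] with t ht
      rw [sub_zero, max_eq_left ht]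
    rw [this, hlayer 0 le_rfl, h0]
  have hPuniv : P Set.univ = 1 := by
    rw [hPdef, Measure.add_apply, hWuniv, Measure.smul_apply, measure_univ, smul_eq_mul, mul_one,
      ← ENNReal.ofReal_add (by linarith) hs0]
    norm_num
  haveI hPprob : IsProbabilityMeasure P := ⟨hPuniv⟩
  -- density identifications
  set dens : ℝ → ENNReal := fun t => ENNReal.ofReal t + 1 with hdensdef
  set hp : ℝ → ENNReal :=
      fun t => if t = -1 then 1 else ENNReal.ofReal t / (ENNReal.ofReal t + 1) with hpdef
  set hq : ℝ → ENNReal := fun t => if t = -1 then 0 else 1 / (ENNReal.ofReal t + 1) with hqdef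
  have hdens_meas : Measurable dens := measurable_id.ennreal_ofReal.add measurable_const
  have hp_meas : Measurable hp := by
    refine Measurable.ite (MeasurableSet.singleton (-1) : MeasurableSet {t : ℝ | t = -1})
      measurable_const ?_
    exact measurable_id.ennreal_ofReal.div (measurable_id.ennreal_ofReal.add measurable_const)
  have hq_meas : Measurable hq := by
    refine Measurable.ite (MeasurableSet.singleton (-1) : MeasurableSet {t : ℝ | t = -1})
      measurable_const ?_
    exact measurable_const.div (measurable_id.ennreal_ofReal.add measurable_const)
  have hdens_ne_top : ∀ t : ℝ, dens t ≠ ⊤ := fun t =>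
    ENNReal.add_ne_top.mpr ⟨ENNReal.ofReal_ne_top, ENNReal.one_ne_top⟩
  have hdens_ne_zero : ∀ t : ℝ, dens t ≠ 0 := fun t => by
    rw [hdensdef]; simp
  have hμeq : P + Q = Q.withDensity dens + ENNReal.ofReal s • Measure.dirac (-1) := by
    have h1 : Q.withDensity dens = Q.withDensity (fun t => ENNReal.ofReal t) + Q := by
      have h2 : dens = (fun t => ENNReal.ofReal t) + (1 : ℝ → ENNReal) := rfl
      rw [h2, withDensity_add_right _ measurable_one, withDensity_one]
    rw [hPdef, h1]
    abel
  have hdirac_wd : ∀ (x : ℝ) (c' : ENNReal) (h : ℝ → ENNReal), Measurable h →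
      (c' • Measure.dirac x).withDensity h = (c' * h x) • Measure.dirac x := by
    intro x c' h hm
    rw [withDensity_smul_measure, mul_smul]
    congr 1
    ext u hu
    rw [withDensity_apply _ hu, setLIntegral_dirac h u, Measure.smul_apply,
      Measure.dirac_apply' _ hu]
    by_cases hxu : x ∈ u
    · simp [hxu]
    · simp [hxu]
  have hne1 : ∀ t : ℝ, 0 ≤ t → t ≠ -1 := fun t ht h => by rw [h] at ht; linarith
  have hPd : (P + Q).withDensity hp = P := by
    rw [hμeq, withDensity_add_measure, ← withDensity_mul Q hdens_meas hp_meas,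
      hdirac_wd (-1) (ENNReal.ofReal s) hp hp_meas]
    have h1 : hp (-1) = 1 := if_pos rfl
    rw [h1, mul_one, hPdef]
    congr 1
    apply withDensity_congr_ae
    filter_upwards [hQae] with t ht
    have ht' : t ≠ -1 := hne1 t ht
    simp only [Pi.mul_apply, hpdef, if_neg ht', hdensdef]
    rw [mul_comm, ENNReal.div_mul_cancel (hdens_ne_zero t) (hdens_ne_top t)]
  have hQd : (P + Q).withDensity hq = Q := by
    rw [hμeq, withDensity_add_measure, ← withDensity_mul Q hdens_meas hq_meas,
      hdirac_wd (-1) (ENNReal.ofReal s) hq hq_meas]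
    have h1 : hq (-1) = 0 := if_pos rfl
    rw [h1, mul_zero, zero_smul, add_zero]
    have h2 : Q.withDensity (dens * hq) = Q.withDensity 1 := by
      apply withDensity_congr_ae
      filter_upwards [hQae] with t ht
      have ht' : t ≠ -1 := hne1 t ht
      simp only [Pi.mul_apply, hqdef, if_neg ht', hdensdef, Pi.one_apply]
      rw [one_div, ENNReal.mul_inv_cancel (hdens_ne_zero t) (hdens_ne_top t)]
    rw [h2, withDensity_one]
  have hrnp : P.rnDeriv (P + Q) =ᵐ[P + Q] hp := by
    have := Measure.rnDeriv_withDensity (P + Q) hp_meas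
    rwa [hPd] at this
  have hrnq : Q.rnDeriv (P + Q) =ᵐ[P + Q] hq := by
    have := Measure.rnDeriv_withDensity (P + Q) hq_meas
    rwa [hQd] at this
  refine ⟨ℝ, inferInstance, P, Q, hPprob, hQprob, fun α hα => ?_⟩
  rw [hockeyStick]
  have hcongr : (fun ω => max ((P.rnDeriv (P + Q) ω).toReal
        - α * (Q.rnDeriv (P + Q) ω).toReal) 0)
      =ᵐ[P + Q] fun t => max ((hp t).toReal - α * (hq t).toReal) 0 := by
    filter_upwards [hrnp, hrnq] with t h1 h2
    rw [h1, h2]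
  rw [integral_congr_ae hcongr]
  have hFmeas : Measurable fun t => max ((hp t).toReal - α * (hq t).toReal) 0 :=
    ((hp_meas.ennreal_toReal).sub ((hq_meas.ennreal_toReal).const_mul α)).max measurable_const
  rw [integral_eq_lintegral_of_nonneg_ae
    (f := fun t => max ((hp t).toReal - α * (hq t).toReal) 0)
    (ae_of_all _ fun t => le_max_right _ _) hFmeas.aestronglyMeasurable]
  have hdirac_part : ∫⁻ t, ENNReal.ofReal (max ((hp t).toReal - α * (hq t).toReal) 0)
      ∂(ENNReal.ofReal s • Measure.dirac (-1)) = ENNReal.ofReal s := by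
    rw [lintegral_smul_measure, lintegral_dirac]
    have h1 : hp (-1) = 1 := if_pos rfl
    have h2 : hq (-1) = 0 := if_pos rfl
    rw [h1, h2]
    simp
  have hwd_part : ∫⁻ t, ENNReal.ofReal (max ((hp t).toReal - α * (hq t).toReal) 0)
      ∂(Q.withDensity dens) = ENNReal.ofReal (H α - s) := by
    rw [lintegral_withDensity_eq_lintegral_mul Q hdens_meas (hFmeas.ennreal_ofReal)]
    rw [← hlayer α hα]
    apply lintegral_congr_ae
    filter_upwards [hQae] with t ht
    have ht' : t ≠ -1 := hne1 t ht
    have ht1 : (0:ℝ) < t + 1 := by linarith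
    have htR : (ENNReal.ofReal t + 1).toReal = t + 1 := by
      rw [ENNReal.toReal_add ENNReal.ofReal_ne_top ENNReal.one_ne_top,
        ENNReal.toReal_ofReal ht, ENNReal.toReal_one]
    have hpt : (hp t).toReal = t / (t + 1) := by
      rw [hpdef]
      simp only [if_neg ht']
      rw [ENNReal.toReal_div, htR, ENNReal.toReal_ofReal ht]
    have hqt : (hq t).toReal = 1 / (t + 1) := by
      rw [hqdef]
      simp only [if_neg ht']
      rw [ENNReal.toReal_div, htR, ENNReal.toReal_one]
    simp only [Pi.mul_apply]
    rw [hpt, hqt]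
    have hmax : max (t / (t + 1) - α * (1 / (t + 1))) 0 = max (t - α) 0 / (t + 1) := by
      rw [mul_one_div, div_sub_div_same, ← max_div_div_right ht1.le, zero_div]
    rw [hmax, ENNReal.ofReal_div_of_pos ht1]
    have hdt : dens t = ENNReal.ofReal (t + 1) := by
      rw [hdensdef]
      simp only []
      rw [ENNReal.ofReal_add ht zero_le_one, ENNReal.ofReal_one]
    rw [hdt, mul_comm, ENNReal.div_mul_cancel (by simp [ht1] : ENNReal.ofReal (t+1) ≠ 0)
      ENNReal.ofReal_ne_top]
  rw [hμeq, lintegral_add_measure, hdirac_part, hwd_part,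
    ← ENNReal.ofReal_add (by linarith [sH_le hcx han h0 hlb hα]) hs0, sub_add_cancel,
    ENNReal.toReal_ofReal (H_nonneg hcx han h0 hlb hα)]

end Rev

/-- A function `H : ℝ_{≥0} → ℝ` is the hockey-stick divergence curve of some pair of
probability measures iff it is convex, nonincreasing, `H(0) = 1`, and `H(α) ≥ (1 − α)₊`. -/
theorem hockeyStick_curve_characterization (H : ℝ → ℝ) :
    (∃ (Ω : Type) (_ : MeasurableSpace Ω) (P Q : Measure Ω),
        IsProbabilityMeasure P ∧ IsProbabilityMeasure Q ∧
        ∀ α : ℝ, 0 ≤ α → H α = hockeyStick α P Q)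
    ↔ (ConvexOn ℝ (Set.Ici (0:ℝ)) H ∧ AntitoneOn H (Set.Ici (0:ℝ)) ∧
        H 0 = 1 ∧ ∀ α : ℝ, 0 ≤ α → max (1 - α) 0 ≤ H α) := by
  constructor
  · rintro ⟨Ω, mΩ, P, Q, hP, hQ, hH⟩
    refine ⟨⟨convex_Ici 0, fun x hx y hy a b ha hb hab => ?_⟩, fun x hx y hy hxy => ?_, ?_, ?_⟩
    · have hx0 : (0:ℝ) ≤ x := hx
      have hy0 : (0:ℝ) ≤ y := hy
      have hxy0 : (0:ℝ) ≤ a • x + b • y := by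
        simp only [smul_eq_mul]
        have := mul_nonneg ha hx0
        have := mul_nonneg hb hy0
        linarith
      rw [hH _ hx0, hH _ hy0, hH _ hxy0]
      have := (hs_convex P Q).2 hx hy ha hb hab
      simpa using this
    · rw [hH x hx, hH y hy]
      exact hs_antitone P Q hx hy hxy
    · rw [hH 0 le_rfl, hs_zero]
    · intro α hα
      rw [hH α hα]
      exact hs_lb P Q hα
  · rintro ⟨hcx, han, h0, hlb⟩
    exact reverse_construction hcx han h0 hlb
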